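/- arXiv:1612.06103 — 2 statements merged into one kernel-verified Lean document; each statement's English description precedes it below -/
import Mathlib

section
/- Let λ be an orthogonal partition of 2n+1, written with 2n+1 terms λ_1 ≥ … ≥ λ_{2n+1} ≥ 0. Among the 2n+1 pairwise distinct integers λ_j + (2n+1−j), exactly n are even, written 2z_1 > … > 2z_n, and exactly n+1 are odd, written 2z'_1+1 > … > 2z'_{n+1}+1. Set a♯_h = z'_h + (n+1−h) for h = 1,…,n+1 and b♯_h = z_h + (n−h) for h = 1,…,n. Then a♯_1 ≥ b♯_1 ≥ a♯_2 ≥ b♯_2 ≥ … ≥ a♯_n ≥ b♯_n ≥ a♯_{n+1}. -/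
open Classical

namespace Wald

/-- `S f k = λ_1 + … + λ_k` (partitions are indexed from 1; index 0 is unused). -/
def S (f : ℕ → ℕ) (k : ℕ) : ℕ := ∑ j ∈ Finset.Icc 1 k, f j

/-- `f` represents a partition of `N`: nonincreasing on indices `≥ 1`,
finitely many nonzero terms, with total sum `N`. -/
structure IsPartition (f : ℕ → ℕ) (N : ℕ) : Prop where
  mono : ∀ ⦃j k : ℕ⦄, 1 ≤ j → j ≤ k → f k ≤ f j
  fin : ∃ m, ∀ j, m < j → f j = 0
  total : ∀ m, (∀ j, m < j → f j = 0) → S f m = N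

/-- multiplicity of `i` as a term of the partition -/
noncomputable def mult (f : ℕ → ℕ) (i : ℕ) : ℕ := Set.ncard {j : ℕ | 1 ≤ j ∧ f j = i}

/-- dominance order: `Dom f g ↔ f ≤ g` -/
def Dom (f g : ℕ → ℕ) : Prop := ∀ k, S f k ≤ S g k

/-- transposed partition: `(transpose f) j = #{i ≥ 1 : f i ≥ j}` for `j ≥ 1` -/
noncomputable def transpose (f : ℕ → ℕ) : ℕ → ℕ :=
  fun j => Set.ncard {i : ℕ | 1 ≤ i ∧ 1 ≤ j ∧ j ≤ f i}

/-- union of two partitions (all terms listed together in nonincreasing order);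
it is characterized by `transpose (unionP f g) = transpose f + transpose g`. -/
noncomputable def unionP (f g : ℕ → ℕ) : ℕ → ℕ :=
  transpose (fun j => transpose f j + transpose g j)

/-- the partition `(1)` -/
def one1 : ℕ → ℕ := fun j => if j = 1 then 1 else 0

/-- symplectic partition: every odd `i ≥ 1` has even multiplicity -/
def Symp (f : ℕ → ℕ) : Prop := ∀ i, Odd i → Even (mult f i)

/-- orthogonal partition: every even `i ≥ 2` has even multiplicity -/
def Orth (f : ℕ → ℕ) : Prop := ∀ i, Even i → 1 ≤ i → Even (mult f i)

/-- `λ_{2j-1} ≡ λ_{2j} (mod 2)` for all `j ≥ 1` (speciality for symplectic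
partitions of `2n` and orthogonal partitions of `2n`). -/
def SpecialPairs (f : ℕ → ℕ) : Prop := ∀ j, 1 ≤ j → f (2*j - 1) % 2 = f (2*j) % 2

/-- speciality for orthogonal partitions of `2n+1`: `λ_1` odd and
`λ_{2j} ≡ λ_{2j+1} (mod 2)` for all `j ≥ 1`. -/
def SpecialOrthOdd (f : ℕ → ℕ) : Prop :=
  Odd (f 1) ∧ ∀ j, 1 ≤ j → f (2*j) % 2 = f (2*j + 1) % 2

/-- `Jord_bp` for symplectic partitions: even `i ≥ 2` with positive multiplicity -/
def JordbpS (f : ℕ → ℕ) : Set ℕ := {i | Even i ∧ 2 ≤ i ∧ 1 ≤ mult f i}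

/-- `Jord_bp` for orthogonal partitions: odd `i ≥ 1` with positive multiplicity -/
def JordbpO (f : ℕ → ℕ) : Set ℕ := {i | Odd i ∧ 1 ≤ mult f i}

/-- the set `{i_1 > … > i_m}` of terms with odd multiplicity -/
def OddSet (f : ℕ → ℕ) : Set ℕ := {i | Odd (mult f i)}

/-- for special symplectic partitions: `{i_1 > … > i_{m'}}`, with `0` added if `m` is odd -/
def Dsymp (f : ℕ → ℕ) : Set ℕ :=
  {i | Odd (mult f i) ∨ (i = 0 ∧ Odd (OddSet f).ncard)}

/-- `a = i_{2h-1}` and `b = i_{2h}` for some `h`: consecutive elements of `Dsymp f`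
with an even number of elements of `Dsymp f` above `a`. -/
def PairedS (f : ℕ → ℕ) (a b : ℕ) : Prop :=
  b < a ∧ a ∈ Dsymp f ∧ b ∈ Dsymp f ∧ Even ((Dsymp f ∩ Set.Ioi a).ncard) ∧
    Dsymp f ∩ Set.Ioo b a = ∅

/-- intervals of a special symplectic partition of `2n` -/
def IsIntervalS (f : ℕ → ℕ) (Δ : Set ℕ) : Prop :=
  (∃ a b, PairedS f a b ∧ Δ = {i | (i = 0 ∨ 1 ≤ mult f i) ∧ b ≤ i ∧ i ≤ a}) ∨
  (∃ i, Even i ∧ (i = 0 ∨ (2 ≤ i ∧ 1 ≤ mult f i)) ∧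
    (¬ ∃ a b, PairedS f a b ∧ b ≤ i ∧ i ≤ a) ∧ Δ = {i})

/-- `a = i_{2h-1}` and `b = i_{2h}` for some `h` (orthogonal partitions of `2n`) -/
def PairedOE (f : ℕ → ℕ) (a b : ℕ) : Prop :=
  b < a ∧ a ∈ OddSet f ∧ b ∈ OddSet f ∧ Even ((OddSet f ∩ Set.Ioi a).ncard) ∧
    OddSet f ∩ Set.Ioo b a = ∅

/-- intervals of a special orthogonal partition of `2n` -/
def IsIntervalOE (f : ℕ → ℕ) (Δ : Set ℕ) : Prop :=
  (∃ a b, PairedOE f a b ∧ Δ = {i | 1 ≤ mult f i ∧ b ≤ i ∧ i ≤ a}) ∨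
  (∃ i, Odd i ∧ 1 ≤ mult f i ∧ (¬ ∃ a b, PairedOE f a b ∧ b ≤ i ∧ i ≤ a) ∧ Δ = {i})

/-- `a = i_{2h}` and `b = i_{2h+1}` for some `h ≥ 1` (orthogonal partitions of `2n+1`) -/
def PairedOO (f : ℕ → ℕ) (a b : ℕ) : Prop :=
  b < a ∧ a ∈ OddSet f ∧ b ∈ OddSet f ∧ Odd ((OddSet f ∩ Set.Ioi a).ncard) ∧
    OddSet f ∩ Set.Ioo b a = ∅

/-- intervals of a special orthogonal partition of `2n+1` (convention `i_0 = ∞`) -/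
def IsIntervalOO (f : ℕ → ℕ) (Δ : Set ℕ) : Prop :=
  (∃ b, b ∈ OddSet f ∧ OddSet f ∩ Set.Ioi b = ∅ ∧ Δ = {i | 1 ≤ mult f i ∧ b ≤ i}) ∨
  (∃ a b, PairedOO f a b ∧ Δ = {i | 1 ≤ mult f i ∧ b ≤ i ∧ i ≤ a}) ∨
  (∃ i, Odd i ∧ 1 ≤ mult f i ∧
    (¬ ((∃ b, b ∈ OddSet f ∧ OddSet f ∩ Set.Ioi b = ∅ ∧ b ≤ i) ∨
        (∃ a b, PairedOO f a b ∧ b ≤ i ∧ i ≤ a))) ∧ Δ = {i})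

/-- `J(Δ) = {j ≥ 1 : λ_j ∈ Δ}` -/
def Jset (f : ℕ → ℕ) (Δ : Set ℕ) : Set ℕ := {j | 1 ≤ j ∧ f j ∈ Δ}

/-- `ζ(λ)` for a special symplectic partition (`j_max(Δ_min) = ∞`, so the smallest
interval contributes no `-1`: its `J`-set has no greatest element). -/
noncomputable def zetaS (f : ℕ → ℕ) : ℕ → ℤ := fun j =>
  if ∃ Δ, IsIntervalS f Δ ∧ IsLeast (Jset f Δ) j then 1
  else if ∃ Δ, IsIntervalS f Δ ∧ IsGreatest (Jset f Δ) j then -1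
  else 0

/-- `ζ(λ)` for a special orthogonal partition of `2n` -/
noncomputable def zetaOE (f : ℕ → ℕ) : ℕ → ℤ := fun j =>
  if ∃ Δ, IsIntervalOE f Δ ∧ IsLeast (Jset f Δ) j then 1
  else if ∃ Δ, IsIntervalOE f Δ ∧ IsGreatest (Jset f Δ) j then -1
  else 0

/-- `J^+` for `λ1` special symplectic and `λ2` special orthogonal (of `2n2`) -/
def JplusSet (f1 f2 : ℕ → ℕ) : Set ℕ :=
  {j | 1 ≤ j ∧ Even (f1 j) ∧ Odd (f2 j) ∧
    ((∃ Δ, IsIntervalS f1 Δ ∧ IsLeast (Jset f1 Δ) j) ∨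
     (∃ Δ, IsIntervalOE f2 Δ ∧ IsLeast (Jset f2 Δ) j))}

/-- `J^-` -/
def JminusSet (f1 f2 : ℕ → ℕ) : Set ℕ :=
  {j | 1 ≤ j ∧ Even (f1 j) ∧ Odd (f2 j) ∧
    ((∃ Δ, IsIntervalS f1 Δ ∧ IsGreatest (Jset f1 Δ) j) ∨
     (∃ Δ, IsIntervalOE f2 Δ ∧ IsGreatest (Jset f2 Δ) j))}

/-- the sequence `ξ` -/
noncomputable def xi (f1 f2 : ℕ → ℕ) : ℕ → ℤ := fun j =>
  if j ∈ JplusSet f1 f2 then 1 else if j ∈ JminusSet f1 f2 then -1 else 0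

/-- partial sums of an integer-valued sequence indexed from 1 -/
def Sz (f : ℕ → ℤ) (k : ℕ) : ℤ := ∑ j ∈ Finset.Icc 1 k, f j

/-- `g` is the greatest orthogonal partition of `N` which is dominated by the
sequence `t` (used to define the Spaltenstein-type duality `d`). -/
def IsDualOf (g : ℕ → ℕ) (N : ℕ) (t : ℕ → ℕ) : Prop :=
  (IsPartition g N ∧ Orth g ∧ Dom g t) ∧
  ∀ ν, IsPartition ν N → Orth ν → Dom ν t → Dom ν g

/-- `g = d(f)` for `f` a symplectic partition of `2m`: the greatest orthogonal
partition of `2m+1` dominated by `^t(f ∪ (1))`. -/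
def IsSympDual (g : ℕ → ℕ) (m : ℕ) (f : ℕ → ℕ) : Prop :=
  IsDualOf g (2*m+1) (transpose (unionP f one1))

/-- `g = d(f)` for `f` an orthogonal partition of `2m`: the greatest orthogonal
partition of `2m` dominated by `^tf`. -/
def IsOrthDual (g : ℕ → ℕ) (m : ℕ) (f : ℕ → ℕ) : Prop :=
  IsDualOf g (2*m) (transpose f)

private lemma icc_insert (a b : ℕ) (h : a ≤ b + 1) :
    Finset.Icc a (b+1) = insert (b+1) (Finset.Icc a b) := by
  ext j; simp only [Finset.mem_Icc, Finset.mem_insert]; omega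

private lemma parity_count (r : ℕ) (hr : r ≤ 1) (a : ℕ) : ∀ b : ℕ,
    ((Finset.Icc a b).filter (fun j => j % 2 = r)).card
      = (b + 2 - r) / 2 - (a + 1 - r) / 2 := by
  intro b
  induction b with
  | zero =>
      rcases Nat.eq_zero_or_pos a with rfl | ha
      · rw [Finset.Icc_self]
        by_cases h0 : (0:ℕ) % 2 = r
        · rw [Finset.filter_singleton, if_pos h0]; simp; omega
        · rw [Finset.filter_singleton, if_neg h0]; simp; omega
      · rw [Finset.Icc_eq_empty (by omega)]; simp; omega
  | succ b ih =>
      rcases le_or_gt a (b+1) with hab | hab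
      · rw [icc_insert a b hab, Finset.filter_insert]
        by_cases hb : (b+1) % 2 = r
        · rw [if_pos hb, Finset.card_insert_of_notMem (by simp), ih]; omega
        · rw [if_neg hb, ih]; omega
      · rw [Finset.Icc_eq_empty (by omega)]
        simp only [Finset.filter_empty, Finset.card_empty]; omega

private lemma ML (n : ℕ) (f : ℕ → ℕ)
    (hmono : ∀ ⦃j k : ℕ⦄, 1 ≤ j → j ≤ k → f k ≤ f j)
    (horth : Orth f) :
    ∀ k, k ≤ 2*n+1 → f (k+1) < f k →
      ((Finset.Icc 1 k).filter (fun j => (f j + (2*n+1 - j)) % 2 = 0)).card = k / 2 := by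
  intro k
  induction k using Nat.strong_induction_on with
  | _ k ih =>
  intro hkN hb
  rcases Nat.eq_zero_or_pos k with rfl | hk1
  · simp
  have hex : ∃ j, 1 ≤ j ∧ f j = f k := ⟨k, hk1, rfl⟩
  set p := Nat.find hex with hpdef
  have hps : 1 ≤ p ∧ f p = f k := Nat.find_spec hex
  have hpk : p ≤ k := Nat.find_min' hex ⟨hk1, rfl⟩
  have hrun : ∀ j, p ≤ j → j ≤ k → f j = f k := by
    intro j hpj hjk
    have h1j : 1 ≤ j := le_trans hps.1 hpj
    have := hmono hps.1 hpj
    have := hmono h1j hjk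
    omega
  have heven : f k % 2 = 0 → (k + 1 - p) % 2 = 0 := by
    intro he
    have hfk1 : 1 ≤ f k := by omega
    have hmult := horth (f k) (Nat.even_iff.mpr he) hfk1
    have hseteq : {j : ℕ | 1 ≤ j ∧ f j = f k} = ↑(Finset.Icc p k) := by
      ext j
      simp only [Set.mem_setOf_eq, Finset.coe_Icc, Set.mem_Icc]
      constructor
      · rintro ⟨h1j, hfj⟩
        refine ⟨Nat.find_min' hex ⟨h1j, hfj⟩, ?_⟩
        by_contra hjk
        have := hmono (by omega : (1:ℕ) ≤ k+1) (by omega : k+1 ≤ j)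
        omega
      · rintro ⟨hpj, hjk⟩
        exact ⟨le_trans hps.1 hpj, hrun j hpj hjk⟩
    have : mult f (f k) = k + 1 - p := by
      rw [mult, hseteq, Set.ncard_coe_finset, Nat.card_Icc]
    rw [this] at hmult
    exact Nat.even_iff.mp hmult
  have hsplit : Finset.Icc 1 k = Finset.Ioc 0 (p-1) ∪ Finset.Ioc (p-1) k := by
    ext j
    simp only [Finset.mem_Icc, Finset.mem_union, Finset.mem_Ioc]
    omega
  have hdisj : Disjoint ((Finset.Ioc 0 (p-1)).filter (fun j => (f j + (2*n+1 - j)) % 2 = 0))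
      ((Finset.Ioc (p-1) k).filter (fun j => (f j + (2*n+1 - j)) % 2 = 0)) := by
    rw [Finset.disjoint_left]
    intro j hj hj'
    simp only [Finset.mem_filter, Finset.mem_Ioc] at hj hj'
    omega
  rw [hsplit, Finset.filter_union, Finset.card_union_of_disjoint hdisj]
  have hc1 : ((Finset.Ioc 0 (p-1)).filter (fun j => (f j + (2*n+1 - j)) % 2 = 0)).card
      = (p-1)/2 := by
    have hicc : Finset.Ioc 0 (p-1) = Finset.Icc 1 (p-1) := by
      ext j; simp only [Finset.mem_Icc, Finset.mem_Ioc]; omega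
    rcases Nat.eq_or_lt_of_le hps.1 with h1p | h1p
    · rw [hicc, ← h1p]; simp
    · rw [hicc]
      have hple : p - 1 + 1 = p := by omega
      have hbd : f (p - 1 + 1) < f (p - 1) := by
        rw [hple]
        have hge := hmono (by omega : (1:ℕ) ≤ p - 1) (by omega : p - 1 ≤ p)
        have hne := Nat.find_min hex (show p - 1 < p by omega)
        have : f (p-1) ≠ f k := fun hc => hne ⟨by omega, hc⟩
        omega
      exact ih (p-1) (by omega) (by omega) hbd
  have hc2 : ((Finset.Ioc (p-1) k).filter (fun j => (f j + (2*n+1 - j)) % 2 = 0)).card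
      = (k + 2 - (f k + 1) % 2) / 2 - (p + 1 - (f k + 1) % 2) / 2 := by
    have hicc : Finset.Ioc (p-1) k = Finset.Icc p k := by
      ext j; simp only [Finset.mem_Icc, Finset.mem_Ioc]; omega
    rw [hicc]
    have hcong : ∀ j ∈ Finset.Icc p k,
        ((f j + (2*n+1 - j)) % 2 = 0) ↔ (j % 2 = (f k + 1) % 2) := by
      intro j hj
      simp only [Finset.mem_Icc] at hj
      rw [hrun j hj.1 hj.2]
      have : j ≤ 2*n+1 := by omega
      omega
    rw [Finset.filter_congr hcong, parity_count ((f k + 1) % 2) (by omega) p k]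
  rw [hc1, hc2]
  rcases Nat.even_or_odd (f k) with he | ho
  · have h1 := heven (Nat.even_iff.mp he)
    have h2 := Nat.even_iff.mp he
    omega
  · have h2 := Nat.odd_iff.mp ho
    omega

private lemma core (n : ℕ) (f : ℕ → ℕ) (d : ℕ → ℕ)
    (hd : ∀ j, d j = f j + (2*n+1 - j))
    (hpart : IsPartition f (2*n+1)) (horth : Orth f)
    (z z' : ℕ → ℕ)
    (hz : ∀ h1 h2, 1 ≤ h1 → h1 < h2 → h2 ≤ n → z h2 < z h1)
    (hz' : ∀ h1 h2, 1 ≤ h1 → h1 < h2 → h2 ≤ n + 1 → z' h2 < z' h1)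
    (hzv : ∀ h, 1 ≤ h → h ≤ n →
      ∃ j, 1 ≤ j ∧ j ≤ 2*n+1 ∧ f j + (2*n+1 - j) = 2 * z h)
    (hz'v : ∀ h, 1 ≤ h → h ≤ n + 1 →
      ∃ j, 1 ≤ j ∧ j ≤ 2*n+1 ∧ f j + (2*n+1 - j) = 2 * z' h + 1)
    (h : ℕ) (h1 : 1 ≤ h) (hn : h ≤ n) :
    z h ≤ z' h + 1 ∧ z' (h+1) ≤ z h := by
  obtain ⟨k, hk1, hkN, hdk0⟩ := hzv h h1 hn
  have hdk : d k = 2 * z h := by rw [hd]; exact hdk0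
  -- basic strict antitonicity
  have hanti : ∀ j j', 1 ≤ j → j < j' → j' ≤ 2*n+1 → d j' < d j := by
    intro j j' h1j hjj' hj'
    have := hpart.mono h1j (le_of_lt hjj')
    rw [hd, hd]
    omega
  have hltpos : ∀ j j', 1 ≤ j → j ≤ 2*n+1 → 1 ≤ j' → j' ≤ 2*n+1 → d j < d j' → j' < j := by
    intro j j' h1j hjN h1j' hj'N hlt
    by_contra hc
    push_neg at hc
    rcases Nat.eq_or_lt_of_le hc with heq | hlt2
    · subst heq; omega
    · have := hanti j j' h1j hlt2 hj'N
      omega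
  have hinj : Set.InjOn d ↑(Finset.Icc 1 (2*n+1)) := by
    intro a ha b hb hab
    simp only [Finset.coe_Icc, Set.mem_Icc] at ha hb
    by_contra hne
    rcases Nat.lt_or_ge a b with hl | hg
    · have := hanti a b ha.1 hl hb.2; omega
    · have := hanti b a hb.1 (by omega) ha.2; omega
  set V := (Finset.Icc 1 (2*n+1)).image d with hV
  have hVcard : V.card = 2*n+1 := by
    rw [hV, Finset.card_image_of_injOn hinj, Nat.card_Icc]
    omega
  have hcnt : ∀ P : ℕ → Prop,
      ((Finset.Icc 1 (2*n+1)).filter (fun j => P (d j))).card = (V.filter P).card := by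
    intro P
    rw [hV, Finset.filter_image,
      Finset.card_image_of_injOn (hinj.mono (Finset.coe_subset.mpr (Finset.filter_subset _ _)))]
  set Ev := V.filter (fun u => u % 2 = 0) with hEvdef
  set Od := V.filter (fun u => u % 2 = 1) with hOddef
  have hEO : Ev.card + Od.card = 2*n+1 := by
    have hneg : V.filter (fun u => ¬ u % 2 = 0) = Od := by
      apply Finset.filter_congr
      intro u _
      omega
    rw [hEvdef, ← hneg, Finset.card_filter_add_card_filter_not, hVcard]
  -- even values are exactly the 2 * z g
  have hzinj : Set.InjOn (fun g => 2 * z g) ↑(Finset.Icc 1 n) := by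
    intro a ha b hb hab
    simp only [Finset.coe_Icc, Set.mem_Icc] at ha hb
    have hab' : 2 * z a = 2 * z b := hab
    by_contra hne
    rcases Nat.lt_or_ge a b with hl | hg
    · have := hz a b ha.1 hl hb.2; omega
    · have := hz b a hb.1 (by omega) ha.2; omega
  have hz'inj : Set.InjOn (fun g => 2 * z' g + 1) ↑(Finset.Icc 1 (n+1)) := by
    intro a ha b hb hab
    simp only [Finset.coe_Icc, Set.mem_Icc] at ha hb
    have hab' : 2 * z' a + 1 = 2 * z' b + 1 := hab
    by_contra hne
    rcases Nat.lt_or_ge a b with hl | hg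
    · have := hz' a b ha.1 hl hb.2; omega
    · have := hz' b a hb.1 (by omega) ha.2; omega
  set Zimg := (Finset.Icc 1 n).image (fun g => 2 * z g) with hZimg
  set Z'img := (Finset.Icc 1 (n+1)).image (fun g => 2 * z' g + 1) with hZ'img
  have hZcard : Zimg.card = n := by
    rw [hZimg, Finset.card_image_of_injOn hzinj, Nat.card_Icc]
    omega
  have hZ'card : Z'img.card = n + 1 := by
    rw [hZ'img, Finset.card_image_of_injOn hz'inj, Nat.card_Icc]
    omega
  have hZsub : Zimg ⊆ Ev := by
    intro u hu
    rw [hZimg] at hu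
    obtain ⟨g, hg, rfl⟩ := Finset.mem_image.mp hu
    simp only [Finset.mem_Icc] at hg
    obtain ⟨j, hj1, hjN, hjv⟩ := hzv g hg.1 hg.2
    rw [hEvdef, Finset.mem_filter]
    constructor
    · rw [hV]
      exact Finset.mem_image.mpr ⟨j, Finset.mem_Icc.mpr ⟨hj1, hjN⟩, by rw [hd]; exact hjv⟩
    · omega
  have hZ'sub : Z'img ⊆ Od := by
    intro u hu
    rw [hZ'img] at hu
    obtain ⟨g, hg, rfl⟩ := Finset.mem_image.mp hu
    simp only [Finset.mem_Icc] at hg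
    obtain ⟨j, hj1, hjN, hjv⟩ := hz'v g hg.1 hg.2
    rw [hOddef, Finset.mem_filter]
    constructor
    · rw [hV]
      exact Finset.mem_image.mpr ⟨j, Finset.mem_Icc.mpr ⟨hj1, hjN⟩, by rw [hd]; exact hjv⟩
    · omega
  have hEvZ : Ev = Zimg := by
    have h1' := Finset.card_le_card hZsub
    have h2' := Finset.card_le_card hZ'sub
    exact (Finset.eq_of_subset_of_card_le hZsub (by omega)).symm
  have hOdZ' : Od = Z'img := by
    have h1' := Finset.card_le_card hZsub
    have h2' := Finset.card_le_card hZ'sub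
    exact (Finset.eq_of_subset_of_card_le hZ'sub (by omega)).symm
  -- positions above k are exactly Icc 1 (k-1)
  have hpos : (Finset.Icc 1 (2*n+1)).filter (fun j => 2 * z h < d j) = Finset.Icc 1 (k-1) := by
    ext j
    simp only [Finset.mem_filter, Finset.mem_Icc]
    constructor
    · rintro ⟨⟨h1j, hjN⟩, hvj⟩
      have := hltpos k j hk1 hkN h1j hjN (by omega)
      exact ⟨h1j, by omega⟩
    · rintro ⟨h1j, hjk⟩
      have hjN : j ≤ 2*n+1 := by omega
      have := hanti j k h1j (by omega) hkN
      exact ⟨⟨h1j, hjN⟩, by omega⟩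
  -- count of even values above k
  have hEk1 : ((Finset.Icc 1 (k-1)).filter (fun j => d j % 2 = 0)).card = h - 1 := by
    have step1 : ((Finset.Icc 1 (k-1)).filter (fun j => d j % 2 = 0))
        = (Finset.Icc 1 (2*n+1)).filter (fun j => 2 * z h < d j ∧ d j % 2 = 0) := by
      rw [← hpos, Finset.filter_filter]
    have step2 : ((Finset.Icc 1 (2*n+1)).filter (fun j => 2 * z h < d j ∧ d j % 2 = 0)).card
        = (V.filter (fun u => 2 * z h < u ∧ u % 2 = 0)).card := by
      convert hcnt (fun u => 2 * z h < u ∧ u % 2 = 0) using 2 <;>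
        (ext x; simp only [Finset.mem_filter])
    have step3 : V.filter (fun u => 2 * z h < u ∧ u % 2 = 0)
        = Zimg.filter (fun u => 2 * z h < u) := by
      rw [← hEvZ, hEvdef, Finset.filter_filter]
      exact Finset.filter_congr (fun u _ => and_comm)
    have step4 : (Zimg.filter (fun u => 2 * z h < u)).card = h - 1 := by
      rw [hZimg, Finset.filter_image,
        Finset.card_image_of_injOn (hzinj.mono (Finset.coe_subset.mpr (Finset.filter_subset _ _)))]
      have step5 : (Finset.Icc 1 n).filter (fun g => 2 * z h < 2 * z g) = Finset.Icc 1 (h-1) := by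
        ext g
        simp only [Finset.mem_filter, Finset.mem_Icc]
        constructor
        · rintro ⟨⟨h1g, hgn⟩, hlt⟩
          refine ⟨h1g, ?_⟩
          by_contra hc
          push_neg at hc
          rcases Nat.eq_or_lt_of_le (show h ≤ g by omega) with heq | hl
          · subst heq; omega
          · have := hz h g h1 hl hgn; omega
        · rintro ⟨h1g, hgh⟩
          have hgn : g ≤ n := by omega
          have := hz g h h1g (by omega) hn
          exact ⟨⟨h1g, hgn⟩, by omega⟩
      rw [step5, Nat.card_Icc]
      omega
    rw [step1, step2, step3, step4]
  -- count of odd values above k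
  set G := (Finset.Icc 1 (n+1)).filter (fun g => z h ≤ z' g) with hGdef
  have hOk1 : ((Finset.Icc 1 (k-1)).filter (fun j => d j % 2 = 1)).card = G.card := by
    have step1 : ((Finset.Icc 1 (k-1)).filter (fun j => d j % 2 = 1))
        = (Finset.Icc 1 (2*n+1)).filter (fun j => 2 * z h < d j ∧ d j % 2 = 1) := by
      rw [← hpos, Finset.filter_filter]
    have step2 : ((Finset.Icc 1 (2*n+1)).filter (fun j => 2 * z h < d j ∧ d j % 2 = 1)).card
        = (V.filter (fun u => 2 * z h < u ∧ u % 2 = 1)).card := by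
      convert hcnt (fun u => 2 * z h < u ∧ u % 2 = 1) using 2 <;>
        (ext x; simp only [Finset.mem_filter])
    have step3 : V.filter (fun u => 2 * z h < u ∧ u % 2 = 1)
        = Z'img.filter (fun u => 2 * z h < u) := by
      rw [← hOdZ', hOddef, Finset.filter_filter]
      exact Finset.filter_congr (fun u _ => and_comm)
    have step4 : (Z'img.filter (fun u => 2 * z h < u)).card = G.card := by
      rw [hZ'img, Finset.filter_image,
        Finset.card_image_of_injOn (hz'inj.mono (Finset.coe_subset.mpr (Finset.filter_subset _ _)))]
      congr 1
      rw [hGdef]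
      exact Finset.filter_congr (fun g _ => by omega)
    rw [step1, step2, step3, step4]
  -- the key equation
  have hkey : (h - 1) + G.card = k - 1 := by
    have hsum := Finset.card_filter_add_card_filter_not
      (s := Finset.Icc 1 (k-1)) (p := fun j => d j % 2 = 0)
    have hneg2 : (Finset.Icc 1 (k-1)).filter (fun j => ¬ d j % 2 = 0)
        = (Finset.Icc 1 (k-1)).filter (fun j => d j % 2 = 1) :=
      Finset.filter_congr (fun j _ => by omega)
    rw [hneg2, hEk1, hOk1, Nat.card_Icc] at hsum
    omega
  -- evens up to k
  have hEk : ((Finset.Icc 1 k).filter (fun j => d j % 2 = 0)).card = h := by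
    have hins : Finset.Icc 1 k = insert k (Finset.Icc 1 (k-1)) := by
      ext j; simp only [Finset.mem_Icc, Finset.mem_insert]; omega
    rw [hins, Finset.filter_insert, if_pos (show d k % 2 = 0 by omega),
      Finset.card_insert_of_notMem (by simp only [Finset.mem_filter, Finset.mem_Icc]; omega),
      hEk1]
    omega
  -- master lemma transported to d
  have hMLd : ∀ m, m ≤ 2*n+1 → f (m+1) < f m →
      ((Finset.Icc 1 m).filter (fun j => d j % 2 = 0)).card = m / 2 := by
    intro m hm hb
    have hfc : (Finset.Icc 1 m).filter (fun j => d j % 2 = 0)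
        = (Finset.Icc 1 m).filter (fun j => (f j + (2*n+1 - j)) % 2 = 0) :=
      Finset.filter_congr (fun j _ => by rw [hd])
    rw [hfc]
    exact ML n f hpart.mono horth m hm hb
  -- evens in the whole range
  have hEN : ((Finset.Icc 1 (2*n+1)).filter (fun j => d j % 2 = 0)).card = n := by
    have h2 : ((Finset.Icc 1 (2*n+1)).filter (fun j => d j % 2 = 0)).card
        = (V.filter (fun u => u % 2 = 0)).card := by
      convert hcnt (fun u => u % 2 = 0) using 2 <;>
        (ext x; simp only [Finset.mem_filter])
    rw [h2, ← hEvdef, hEvZ, hZcard]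
  constructor
  · -- Goal 1 : z h ≤ z' h + 1
    by_contra hc1
    push_neg at hc1
    have hGle : G.card ≤ h - 1 := by
      have hsub : G ⊆ Finset.Icc 1 (h-1) := by
        intro g hg
        rw [hGdef, Finset.mem_filter, Finset.mem_Icc] at hg
        rw [Finset.mem_Icc]
        refine ⟨hg.1.1, ?_⟩
        by_contra hcg
        push_neg at hcg
        rcases Nat.eq_or_lt_of_le (show h ≤ g by omega) with heq | hl
        · subst heq; omega
        · have := hz' h g h1 hl hg.1.2; omega
      calc G.card ≤ (Finset.Icc 1 (h-1)).card := Finset.card_le_card hsub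
        _ = h - 1 := by rw [Nat.card_Icc]; omega
    have hkle : k ≤ 2*h - 1 := by omega
    by_cases hvm : ∃ j, 1 ≤ j ∧ j ≤ 2*n+1 ∧ d j = 2 * z h - 1
    · obtain ⟨j0, hj01, hj0N, hdj0⟩ := hvm
      have hodmem : (2 * z h - 1) ∈ Od := by
        rw [hOddef, Finset.mem_filter]
        refine ⟨?_, by omega⟩
        rw [hV]
        exact Finset.mem_image.mpr ⟨j0, Finset.mem_Icc.mpr ⟨hj01, hj0N⟩, hdj0⟩
      rw [hOdZ', hZ'img] at hodmem
      obtain ⟨g0, hg0m, hg0e⟩ := Finset.mem_image.mp hodmem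
      rw [Finset.mem_Icc] at hg0m
      have hg0e' : 2 * z' g0 + 1 = 2 * z h - 1 := hg0e
      have hg0v : z' g0 = z h - 1 := by omega
      have hg0h : g0 < h := by
        by_contra hcg
        push_neg at hcg
        rcases Nat.eq_or_lt_of_le hcg with heq | hl
        · subst heq; omega
        · have := hz' h g0 h1 hl hg0m.2; omega
      have hGle2 : G.card ≤ h - 2 := by
        have hsub2 : G ⊆ Finset.Icc 1 (g0-1) := by
          intro g hg
          rw [hGdef, Finset.mem_filter, Finset.mem_Icc] at hg
          rw [Finset.mem_Icc]
          refine ⟨hg.1.1, ?_⟩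
          by_contra hcg
          push_neg at hcg
          rcases Nat.eq_or_lt_of_le (show g0 ≤ g by omega) with heq | hl
          · subst heq; omega
          · have := hz' g0 g hg0m.1 hl hg.1.2; omega
        calc G.card ≤ (Finset.Icc 1 (g0-1)).card := Finset.card_le_card hsub2
          _ ≤ h - 2 := by rw [Nat.card_Icc]; omega
      have hkle2 : k ≤ 2*h - 2 := by omega
      have hj0k : j0 = k + 1 := by
        have hj0gt : k < j0 := hltpos j0 k hj01 hj0N hk1 hkN (by omega)
        by_contra hne
        have hb1 : d j0 < d (k+1) := hanti (k+1) j0 (by omega) (by omega) hj0N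
        have hb2 : d (k+1) < d k := hanti k (k+1) hk1 (by omega) (by omega)
        omega
      have hk1N : k + 1 ≤ 2*n+1 := by omega
      have hfk1 : f (k+1) = f k := by
        have e1 := hdj0
        rw [hj0k, hd] at e1
        omega
      set q := Nat.findGreatest (fun j => f j = f k) (2*n+1) with hqdef
      have hqP : f q = f k := Nat.findGreatest_spec (P := fun j => f j = f k) hkN rfl
      have hqN : q ≤ 2*n+1 := Nat.findGreatest_le _
      have hq1 : k + 1 ≤ q := Nat.le_findGreatest hk1N hfk1
      have hrunq : ∀ j, k ≤ j → j ≤ q → f j = f k := by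
        intro j hkj hjq
        have h1j : 1 ≤ j := le_trans hk1 hkj
        have := hpart.mono hk1 hkj
        have := hpart.mono h1j hjq
        omega
      have heq2 : ((Finset.Icc 1 q).filter (fun j => d j % 2 = 0)).card = q / 2 := by
        rcases Nat.eq_or_lt_of_le hqN with heqN | hlt
        · rw [heqN, hEN]; omega
        · apply hMLd q hqN
          have hnotP := Nat.findGreatest_is_greatest (P := fun j => f j = f k)
            (show q < q+1 by omega) (show q+1 ≤ 2*n+1 by omega)
          have hnotP' : ¬ f (q+1) = f k := hnotP
          have := hpart.mono (show 1 ≤ q by omega) (show q ≤ q+1 by omega)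
          omega
      have hdisjq : Disjoint ((Finset.Icc 1 k).filter (fun j => d j % 2 = 0))
          ((Finset.Ioc k q).filter (fun j => d j % 2 = 0)) := by
        rw [Finset.disjoint_left]
        intro j hj hj'
        simp only [Finset.mem_filter, Finset.mem_Icc, Finset.mem_Ioc] at hj hj'
        omega
      have hunion : ((Finset.Icc 1 q).filter (fun j => d j % 2 = 0)).card
          = ((Finset.Icc 1 k).filter (fun j => d j % 2 = 0)).card
            + ((Finset.Ioc k q).filter (fun j => d j % 2 = 0)).card := by
        have hsplitq : Finset.Icc 1 q = Finset.Icc 1 k ∪ Finset.Ioc k q := by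
          ext j
          simp only [Finset.mem_Icc, Finset.mem_union, Finset.mem_Ioc]
          omega
        rw [hsplitq, Finset.filter_union, Finset.card_union_of_disjoint hdisjq]
      have hmid : ((Finset.Ioc k q).filter (fun j => d j % 2 = 0)).card
          = (q + 2 - k % 2) / 2 - (k + 1 + 1 - k % 2) / 2 := by
        have hicc : Finset.Ioc k q = Finset.Icc (k+1) q := by
          ext j; simp only [Finset.mem_Icc, Finset.mem_Ioc]; omega
        rw [hicc]
        have hcong : ∀ j ∈ Finset.Icc (k+1) q, (d j % 2 = 0) ↔ (j % 2 = k % 2) := by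
          intro j hj
          rw [Finset.mem_Icc] at hj
          rw [hd, hrunq j (by omega) hj.2]
          have hjN : j ≤ 2*n+1 := le_trans hj.2 hqN
          omega
        rw [Finset.filter_congr hcong, parity_count (k % 2) (by omega) (k+1) q]
      omega
    · have hbd : f (k+1) < f k := by
        have hle := hpart.mono hk1 (show k ≤ k+1 by omega)
        rcases Nat.eq_or_lt_of_le hle with heq | hlt
        · exfalso
          apply hvm
          refine ⟨k+1, by omega, by omega, ?_⟩
          rw [hd]
          omega
        · exact hlt
      have := hMLd k hkN hbd
      omega
  · -- Goal 2 : z' (h+1) ≤ z h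
    by_contra hc2
    push_neg at hc2
    have hsub : Finset.Icc 1 (h+1) ⊆ G := by
      intro g hg
      rw [Finset.mem_Icc] at hg
      rw [hGdef, Finset.mem_filter, Finset.mem_Icc]
      refine ⟨⟨hg.1, by omega⟩, ?_⟩
      rcases Nat.eq_or_lt_of_le hg.2 with heq | hl
      · subst heq; omega
      · have := hz' g (h+1) hg.1 hl (by omega); omega
    have hGge : h + 1 ≤ G.card := by
      calc h + 1 = (Finset.Icc 1 (h+1)).card := by rw [Nat.card_Icc]; omega
        _ ≤ G.card := Finset.card_le_card hsub
    have hkge : 2*h + 1 ≤ k := by omega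
    by_cases hvp : ∃ j, 1 ≤ j ∧ j ≤ 2*n+1 ∧ d j = 2 * z h + 1
    · obtain ⟨j0, hj01, hj0N, hdj0⟩ := hvp
      have hodmem : (2 * z h + 1) ∈ Od := by
        rw [hOddef, Finset.mem_filter]
        refine ⟨?_, by omega⟩
        rw [hV]
        exact Finset.mem_image.mpr ⟨j0, Finset.mem_Icc.mpr ⟨hj01, hj0N⟩, hdj0⟩
      rw [hOdZ', hZ'img] at hodmem
      obtain ⟨g0, hg0m, hg0e⟩ := Finset.mem_image.mp hodmem
      rw [Finset.mem_Icc] at hg0m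
      have hg0e' : 2 * z' g0 + 1 = 2 * z h + 1 := hg0e
      have hg0v : z' g0 = z h := by omega
      have hg0h : h + 2 ≤ g0 := by
        by_contra hcg
        push_neg at hcg
        rcases Nat.eq_or_lt_of_le (show g0 ≤ h+1 by omega) with heq | hl
        · subst heq; omega
        · have := hz' g0 (h+1) hg0m.1 hl (by omega); omega
      have hGge2 : h + 2 ≤ G.card := by
        have hsub2 : insert g0 (Finset.Icc 1 (h+1)) ⊆ G := by
          rw [Finset.insert_subset_iff]
          constructor
          · rw [hGdef, Finset.mem_filter, Finset.mem_Icc]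
            exact ⟨⟨by omega, hg0m.2⟩, by omega⟩
          · exact hsub
        have hcard := Finset.card_le_card hsub2
        rw [Finset.card_insert_of_notMem (by rw [Finset.mem_Icc]; omega),
          Nat.card_Icc] at hcard
        omega
      have hkge2 : 2*h + 2 ≤ k := by omega
      have hj0k : j0 = k - 1 := by
        have hj0lt : j0 < k := hltpos k j0 hk1 hkN hj01 hj0N (by omega)
        by_contra hne
        have hb1 : d (k-1) < d j0 := hanti j0 (k-1) hj01 (by omega) (by omega)
        have hb2 : d k < d (k-1) := hanti (k-1) k (by omega) (by omega) hkN
        omega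
      have hfk1 : f (k-1) = f k := by
        have e1 := hdj0
        rw [hj0k, hd] at e1
        omega
      have hex2 : ∃ j, 1 ≤ j ∧ f j = f k := ⟨k, hk1, rfl⟩
      set p := Nat.find hex2 with hpdef
      have hps : 1 ≤ p ∧ f p = f k := Nat.find_spec hex2
      have hpk : p ≤ k - 1 := Nat.find_min' hex2 ⟨by omega, hfk1⟩
      have hrunp : ∀ j, p ≤ j → j ≤ k → f j = f k := by
        intro j hpj hjk
        have h1j : 1 ≤ j := le_trans hps.1 hpj
        have := hpart.mono hps.1 hpj
        have := hpart.mono h1j hjk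
        omega
      have hc0 : ((Finset.Icc 1 (p-1)).filter (fun j => d j % 2 = 0)).card = (p-1)/2 := by
        rcases Nat.eq_or_lt_of_le hps.1 with h1p | h1p
        · rw [← h1p]; simp
        · apply hMLd (p-1) (by omega)
          have hple : p - 1 + 1 = p := by omega
          rw [hple]
          have hge := hpart.mono (show 1 ≤ p-1 by omega) (show p-1 ≤ p by omega)
          have hne := Nat.find_min hex2 (show p-1 < p by omega)
          have : f (p-1) ≠ f k := fun hcc => hne ⟨by omega, hcc⟩
          omega
      have hdisjp : Disjoint ((Finset.Icc 1 (p-1)).filter (fun j => d j % 2 = 0))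
          ((Finset.Ioc (p-1) k).filter (fun j => d j % 2 = 0)) := by
        rw [Finset.disjoint_left]
        intro j hj hj'
        simp only [Finset.mem_filter, Finset.mem_Icc, Finset.mem_Ioc] at hj hj'
        omega
      have hunion : ((Finset.Icc 1 k).filter (fun j => d j % 2 = 0)).card
          = ((Finset.Icc 1 (p-1)).filter (fun j => d j % 2 = 0)).card
            + ((Finset.Ioc (p-1) k).filter (fun j => d j % 2 = 0)).card := by
        have hsplitp : Finset.Icc 1 k = Finset.Icc 1 (p-1) ∪ Finset.Ioc (p-1) k := by
          ext j
          simp only [Finset.mem_Icc, Finset.mem_union, Finset.mem_Ioc]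
          omega
        rw [hsplitp, Finset.filter_union, Finset.card_union_of_disjoint hdisjp]
      have hmid : ((Finset.Ioc (p-1) k).filter (fun j => d j % 2 = 0)).card
          = (k + 2 - k % 2) / 2 - (p + 1 - k % 2) / 2 := by
        have hicc : Finset.Ioc (p-1) k = Finset.Icc p k := by
          ext j; simp only [Finset.mem_Icc, Finset.mem_Ioc]; omega
        rw [hicc]
        have hcong : ∀ j ∈ Finset.Icc p k, (d j % 2 = 0) ↔ (j % 2 = k % 2) := by
          intro j hj
          rw [Finset.mem_Icc] at hj
          rw [hd, hrunp j hj.1 hj.2]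
          have hjN : j ≤ 2*n+1 := le_trans hj.2 hkN
          omega
        rw [Finset.filter_congr hcong, parity_count (k % 2) (by omega) p k]
      omega
    · have hk2 : 2 ≤ k := by omega
      have hbd : f (k-1+1) < f (k-1) := by
        have hkk : k - 1 + 1 = k := by omega
        rw [hkk]
        have hle := hpart.mono (show 1 ≤ k-1 by omega) (show k-1 ≤ k by omega)
        rcases Nat.eq_or_lt_of_le hle with heq | hlt
        · exfalso
          apply hvp
          refine ⟨k-1, by omega, by omega, ?_⟩
          rw [hd]
          omega
        · exact hlt
      have := hMLd (k-1) (by omega) hbd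
      omega


/-- Inequality (1) in the proof of Lemma 1.4: with `a♯_h = z'_h + (n+1-h)` and
`b♯_h = z_h + (n-h)`, one has `a♯_1 ≥ b♯_1 ≥ a♯_2 ≥ … ≥ b♯_n ≥ a♯_{n+1}`. -/
theorem stmt18 (n : ℕ) (f : ℕ → ℕ)
    (hpart : IsPartition f (2*n+1)) (horth : Orth f)
    (z z' : ℕ → ℕ)
    (hz : ∀ h1 h2, 1 ≤ h1 → h1 < h2 → h2 ≤ n → z h2 < z h1)
    (hz' : ∀ h1 h2, 1 ≤ h1 → h1 < h2 → h2 ≤ n + 1 → z' h2 < z' h1)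
    (hzv : ∀ h, 1 ≤ h → h ≤ n →
      ∃ j, 1 ≤ j ∧ j ≤ 2*n+1 ∧ f j + (2*n+1 - j) = 2 * z h)
    (hz'v : ∀ h, 1 ≤ h → h ≤ n + 1 →
      ∃ j, 1 ≤ j ∧ j ≤ 2*n+1 ∧ f j + (2*n+1 - j) = 2 * z' h + 1) :
    ∀ h, 1 ≤ h → h ≤ n →
      z h + (n - h) ≤ z' h + (n + 1 - h) ∧
      z' (h+1) + (n + 1 - (h+1)) ≤ z h + (n - h) := by
  intro h hh1 hhn
  obtain ⟨g1, g2⟩ := core n f (fun j => f j + (2*n+1 - j)) (fun j => rfl)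
    hpart horth z z' hz hz' hzv hz'v h hh1 hhn
  constructor <;> omega

end Wald
end

section
/- Let (X,Y) be a pair of finite subsets of ℕ of rank N, and let d be an integer with d ≥ x for every x ∈ X ∪ Y. Set X' = {0,1,…,d} ∖ {d − y : y ∈ Y} and Y' = {0,1,…,d} ∖ {d − x : x ∈ X}. Then (X',Y') is a symbol of rank N whose defect equals the defect of (X,Y), and applying the same construction to (X',Y') with the same d yields back (X,Y). (Thus the duality (X,Y) ↦ (X',Y') on symbols of rank N preserves the defect and is involutive.) -/
open Classical

namespace Wald

/-- Section 1.2: the duality `(X,Y) ↦ (X',Y')` on symbols preserves the rank and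
the defect, and is involutive. -/
theorem stmt19 (N : ℕ) (X Y : Finset ℕ)
    (hrank : (∑ x ∈ X, (x : ℤ)) + (∑ y ∈ Y, (y : ℤ))
        - ((X.card + Y.card : ℤ) - 1)^2 / 4 = N)
    (d : ℕ) (hd : ∀ x ∈ X ∪ Y, x ≤ d)
    (X' Y' : Finset ℕ)
    (hX' : X' = Finset.range (d+1) \ Y.image (fun y => d - y))
    (hY' : Y' = Finset.range (d+1) \ X.image (fun x => d - x)) :
    ((∑ x ∈ X', (x : ℤ)) + (∑ y ∈ Y', (y : ℤ))
        - ((X'.card + Y'.card : ℤ) - 1)^2 / 4 = N) ∧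
    ((X'.card : ℤ) - (Y'.card : ℤ)).natAbs = ((X.card : ℤ) - (Y.card : ℤ)).natAbs ∧
    Finset.range (d+1) \ Y'.image (fun y => d - y) = X ∧
    Finset.range (d+1) \ X'.image (fun x => d - x) = Y := by
  have hXd : ∀ x ∈ X, x ≤ d := fun x hx => hd x (Finset.mem_union_left _ hx)
  have hYd : ∀ y ∈ Y, y ≤ d := fun y hy => hd y (Finset.mem_union_right _ hy)
  have himsub : ∀ (T : Finset ℕ), (∀ t ∈ T, t ≤ d) →
      T.image (fun t => d - t) ⊆ Finset.range (d+1) := by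
    intro T hT a ha
    simp only [Finset.mem_image] at ha
    obtain ⟨t, ht, rfl⟩ := ha
    exact Finset.mem_range.mpr (by omega)
  have hinj : ∀ (T : Finset ℕ), (∀ t ∈ T, t ≤ d) →
      ∀ a ∈ T, ∀ b ∈ T, d - a = d - b → a = b := by
    intro T hT a ha b hb h
    have := hT a ha; have := hT b hb; omega
  have hcard : ∀ (T : Finset ℕ), (∀ t ∈ T, t ≤ d) →
      (Finset.range (d+1) \ T.image (fun t => d - t)).card = d + 1 - T.card := by
    intro T hT
    rw [Finset.card_sdiff_of_subset (himsub T hT), Finset.card_range,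
      Finset.card_image_of_injOn (hinj T hT)]
  have hcardle : ∀ (T : Finset ℕ), (∀ t ∈ T, t ≤ d) → T.card ≤ d + 1 := by
    intro T hT
    calc T.card ≤ (Finset.range (d+1)).card :=
          Finset.card_le_card (fun t ht => Finset.mem_range.mpr (by have := hT t ht; omega))
      _ = d + 1 := Finset.card_range _
  have hsum : ∀ (T : Finset ℕ), (∀ t ∈ T, t ≤ d) →
      (∑ x ∈ Finset.range (d+1) \ T.image (fun t => d - t), (x:ℤ))
        = (∑ x ∈ Finset.range (d+1), (x:ℤ)) - ((T.card : ℤ) * d - ∑ t ∈ T, (t:ℤ)) := by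
    intro T hT
    have h1 := Finset.sum_sdiff (f := fun x : ℕ => (x:ℤ)) (himsub T hT)
    have h2 : (∑ x ∈ T.image (fun t => d - t), (x:ℤ)) = (T.card : ℤ) * d - ∑ t ∈ T, (t:ℤ) := by
      rw [Finset.sum_image (hinj T hT)]
      have h3 : ∀ t ∈ T, ((d - t : ℕ) : ℤ) = (d : ℤ) - t := by
        intro t ht; have := hT t ht; omega
      rw [Finset.sum_congr rfl h3, Finset.sum_sub_distrib, Finset.sum_const, nsmul_eq_mul]
    linarith
  have key : ∀ (T : Finset ℕ), (∀ t ∈ T, t ≤ d) →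
      Finset.range (d+1) \ (Finset.range (d+1) \ T.image (fun t => d - t)).image
        (fun y => d - y) = T := by
    intro T hT
    ext a
    simp only [Finset.mem_sdiff, Finset.mem_image, Finset.mem_range, not_exists, not_and]
    constructor
    · rintro ⟨ha, h⟩
      by_contra haT
      refine h (d - a) ⟨by omega, ?_⟩ (by omega)
      intro t ht he
      have := hT t ht
      exact haT ((show t = a by omega) ▸ ht)
    · intro haT
      have had := hT a haT
      refine ⟨by omega, ?_⟩
      rintro y ⟨hy, h⟩ hya
      exact h a haT (by omega)
  refine ⟨?_, ?_, ?_, ?_⟩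
  · have hR : (∑ x ∈ Finset.range (d+1), (x:ℤ)) * 2 = ((d:ℤ)+1)*d := by
      have h4 := Finset.sum_range_id_mul_two (d+1)
      have h5 := congrArg (fun n : ℕ => (n : ℤ)) h4
      push_cast at h5
      linarith
    rw [hX', hY', hsum Y hYd, hsum X hXd, hcard Y hYd, hcard X hXd]
    have hp := hcardle X hXd
    have hq := hcardle Y hYd
    have hcp : ((d + 1 - X.card : ℕ) : ℤ) = (d:ℤ) + 1 - X.card := by omega
    have hcq : ((d + 1 - Y.card : ℕ) : ℤ) = (d:ℤ) + 1 - Y.card := by omega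
    rw [hcq, hcp]
    have key1 : ((d:ℤ) + 1 - Y.card + ((d:ℤ) + 1 - X.card) - 1)^2 / 4
        = ((X.card:ℤ) + Y.card - 1)^2 / 4
          + ((d:ℤ)*d - d*((X.card:ℤ) + Y.card - 1)) := by
      rw [show ((d:ℤ) + 1 - Y.card + ((d:ℤ) + 1 - X.card) - 1)^2
          = ((X.card:ℤ) + Y.card - 1)^2 + ((d:ℤ)*d - d*((X.card:ℤ) + Y.card - 1))*4 by ring]
      exact Int.add_mul_ediv_right _ _ (by norm_num)
    rw [key1]
    linear_combination hrank + hR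
  · rw [hX', hY', hcard Y hYd, hcard X hXd]
    have hp := hcardle X hXd
    have hq := hcardle Y hYd
    omega
  · rw [hY', key X hXd]
  · rw [hX', key Y hYd]


end Wald
end
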